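/- If G is a finite simple graph of order n with domination number γ(G) ≥ 2, then the number of edges of G is at most ⌊(n − γ(G))(n − γ(G) + 2)/2⌋. -/

import Mathlib

/-- A finite set of vertices `D` is a dominating set of `G` if every vertex
is in `D` or adjacent to a vertex in `D`. -/
def SimpleGraph.IsDominatingSet {V : Type*} (G : SimpleGraph V) (D : Finset V) : Prop :=
  ∀ v : V, v ∈ D ∨ ∃ u ∈ D, G.Adj u v

/-- The domination number of `G`: the minimum cardinality of a dominating set. -/
noncomputable def SimpleGraph.domNum {V : Type*} (G : SimpleGraph V) : ℕ :=
  sInf {n : ℕ | ∃ D : Finset V, G.IsDominatingSet D ∧ D.card = n}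

/-- The `k`-synchronous bondage number of `G`: the minimum cardinality of a set of edges
whose deletion increases the domination number by exactly `k`.  (`Sb 1` is the classical
bondage number.) -/
noncomputable def SimpleGraph.synchBondage {V : Type*} (G : SimpleGraph V) (k : ℕ) : ℕ :=
  sInf {m : ℕ | ∃ E' : Finset (Sym2 V), ↑E' ⊆ G.edgeSet ∧
    (G.deleteEdges ↑E').domNum = G.domNum + k ∧ E'.card = m}

section VizingAux
set_option linter.unusedSectionVars false
set_option maxHeartbeats 1000000

open Finset
namespace SimpleGraph
variable {V : Type*} [Fintype V] [DecidableEq V] (G : SimpleGraph V) [DecidableRel G.Adj]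

lemma domNum_le_card {D : Finset V} (hD : G.IsDominatingSet D) : G.domNum ≤ D.card :=
  Nat.sInf_le ⟨D, hD, rfl⟩

lemma exists_min_dom : ∃ D : Finset V, G.IsDominatingSet D ∧ D.card = G.domNum := by
  have hne : {n : ℕ | ∃ D : Finset V, G.IsDominatingSet D ∧ D.card = n}.Nonempty :=
    ⟨Finset.univ.card, Finset.univ, fun v => Or.inl (mem_univ v), rfl⟩
  exact Nat.sInf_mem hne

lemma domNum_le_cardV : G.domNum ≤ Fintype.card V := by
  simpa using G.domNum_le_card (D := Finset.univ) (fun v => Or.inl (mem_univ v))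

lemma domNum_add_le (S : Finset V) :
    G.domNum + ((S.biUnion (fun s => G.neighborFinset s)) \ S).card ≤ Fintype.card V := by
  set T := (S.biUnion (fun s => G.neighborFinset s)) \ S with hT
  have hdom : G.IsDominatingSet Tᶜ := by
    intro v
    by_cases hv : v ∈ Tᶜ
    · exact Or.inl hv
    · have hvT : v ∈ T := by simpa using hv
      obtain ⟨hvb, hvs⟩ := Finset.mem_sdiff.mp hvT
      obtain ⟨s, hs, hadj⟩ := Finset.mem_biUnion.mp hvb
      refine Or.inr ⟨s, ?_, by simpa using hadj⟩
      simp [Finset.mem_compl, hT, Finset.mem_sdiff, hs]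
  have h1 := G.domNum_le_card hdom
  have h2 : Tᶜ.card = Fintype.card V - T.card := Finset.card_compl T
  have h3 : T.card ≤ Fintype.card V := Finset.card_le_univ T
  omega

lemma degree_add_domNum_le (v : V) : G.degree v + G.domNum ≤ Fintype.card V := by
  have := G.domNum_add_le {v}
  rw [Finset.singleton_biUnion] at this
  have hv : v ∉ G.neighborFinset v := by simp
  rw [Finset.sdiff_singleton_eq_erase, Finset.erase_eq_of_notMem hv] at this
  have hd : (G.neighborFinset v).card = G.degree v := G.card_neighborFinset_eq_degree v
  omega

lemma pair_bound (v x : V) :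
    G.domNum + (G.neighborFinset v ∪ G.neighborFinset x).card ≤ Fintype.card V + 2 := by
  have h := G.domNum_add_le {v, x}
  have hb : ({v, x} : Finset V).biUnion (fun s => G.neighborFinset s)
      = G.neighborFinset v ∪ G.neighborFinset x := by
    rw [Finset.biUnion_insert, Finset.singleton_biUnion]
  rw [hb] at h
  have h2 : (G.neighborFinset v ∪ G.neighborFinset x).card ≤
      ((G.neighborFinset v ∪ G.neighborFinset x) \ {v, x}).card + ({v, x} : Finset V).card :=
    Finset.card_le_card_sdiff_add_card
  have h3 : ({v, x} : Finset V).card ≤ 2 := Finset.card_insert_le _ _ |>.trans (by simp)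
  omega


lemma adj_filter_bound {v x : V} (hadj : G.Adj v x) :
    ((Finset.univ \ insert v (G.neighborFinset v)).filter (G.Adj x)).card
      + G.degree v + G.domNum ≤ Fintype.card V + 1 := by
  set A := G.neighborFinset v with hA
  set Bs := Finset.univ \ insert v A with hB
  set P := Bs.filter (G.Adj x) with hP
  have hsub : insert v (A ∪ P) ⊆ A ∪ G.neighborFinset x := by
    intro u hu
    rcases Finset.mem_insert.mp hu with rfl | hu
    · exact Finset.mem_union_right _ (by simp [mem_neighborFinset, hadj.symm])
    · rcases Finset.mem_union.mp hu with h | h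
      · exact Finset.mem_union_left _ h
      · exact Finset.mem_union_right _
          (by simpa [mem_neighborFinset] using (Finset.mem_filter.mp h).2)
  have hvA : v ∉ A ∪ P := by
    simp [hP, hB, Finset.mem_union, Finset.mem_filter, Finset.mem_sdiff, hA]
  have hdisjBA : Disjoint Bs A :=
    (Finset.sdiff_disjoint).mono_right (Finset.subset_insert _ _)
  have hdisj : Disjoint A P :=
    (hdisjBA.symm).mono_right (Finset.filter_subset _ _)
  have hcard : 1 + A.card + P.card ≤ (A ∪ G.neighborFinset x).card := by
    have h1 : (insert v (A ∪ P)).card = (A ∪ P).card + 1 :=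
      Finset.card_insert_of_notMem hvA
    have h2 : (A ∪ P).card = A.card + P.card := Finset.card_union_of_disjoint hdisj
    have h3 := Finset.card_le_card hsub
    omega
  have h2 := G.pair_bound v x
  rw [← hA] at h2
  have hd : A.card = G.degree v := G.card_neighborFinset_eq_degree v
  omega

lemma filter_card_comm (s t : Finset V) :
    ∑ u ∈ s, (t.filter (G.Adj u)).card = ∑ x ∈ t, (s.filter (G.Adj x)).card := by
  simp only [Finset.card_filter]
  rw [Finset.sum_comm]
  refine Finset.sum_congr rfl fun x _ => Finset.sum_congr rfl fun u _ => ?_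
  simp only [G.adj_comm u x]

lemma attach_filter_card (s : Finset V) (p : V → Prop) [DecidablePred p] :
    (s.attach.filter (fun y => p y.val)).card = (s.filter p).card := by
  apply Finset.card_bij (fun (y : {a // a ∈ s}) _ => y.val)
  · intro a ha
    exact Finset.mem_filter.mpr ⟨a.2, (Finset.mem_filter.mp ha).2⟩
  · intro a _ b _ h
    exact Subtype.ext h
  · intro u hu
    exact ⟨⟨u, (Finset.mem_filter.mp hu).1⟩,
      Finset.mem_filter.mpr ⟨Finset.mem_attach _ _, (Finset.mem_filter.mp hu).2⟩, rfl⟩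


lemma comap_degree (s : Finset V) (y : {a // a ∈ s})
    [inst : DecidableRel (G.comap (Subtype.val : {a // a ∈ s} → V)).Adj] :
    (G.comap (Subtype.val : {a // a ∈ s} → V)).degree y = (s.filter (G.Adj y.val)).card := by
  rw [← SimpleGraph.card_neighborFinset_eq_degree, SimpleGraph.neighborFinset_eq_filter,
    Finset.univ_eq_attach]
  apply Finset.card_bij (fun (z : {a // a ∈ s}) _ => z.val)
  · intro a ha
    have h := Finset.mem_filter.mp ha
    exact Finset.mem_filter.mpr ⟨a.2, h.2⟩
  · intro a _ b _ h
    exact Subtype.ext h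
  · intro u hu
    have h := Finset.mem_filter.mp hu
    exact ⟨⟨u, h.1⟩, Finset.mem_filter.mpr ⟨Finset.mem_attach _ _, h.2⟩, rfl⟩

lemma domNum_le_comap_succ (v : V) :
    G.domNum ≤ (G.comap (Subtype.val :
      {a // a ∈ (Finset.univ \ insert v (G.neighborFinset v))} → V)).domNum + 1 := by
  set Bs := Finset.univ \ insert v (G.neighborFinset v) with hBs
  set H := G.comap (Subtype.val : {a // a ∈ Bs} → V) with hH
  letI : DecidableRel H.Adj := fun a b => (inferInstance : Decidable (G.Adj a.val b.val))
  obtain ⟨D, hDdom, hDcard⟩ := H.exists_min_dom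
  have hdom : G.IsDominatingSet (insert v (D.image Subtype.val)) := by
    intro u
    by_cases hu : u ∈ Bs
    · rcases hDdom ⟨u, hu⟩ with h | ⟨w, hw, hadj⟩
      · exact Or.inl (Finset.mem_insert_of_mem (Finset.mem_image.mpr ⟨⟨u,hu⟩, h, rfl⟩))
      · exact Or.inr ⟨w.val, Finset.mem_insert_of_mem (Finset.mem_image.mpr ⟨w, hw, rfl⟩), hadj⟩
    · have hmem : u ∈ insert v (G.neighborFinset v) := by
        by_contra hc; exact hu (Finset.mem_sdiff.mpr ⟨Finset.mem_univ u, hc⟩)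
      rcases Finset.mem_insert.mp hmem with rfl | hn
      · exact Or.inl (Finset.mem_insert_self _ _)
      · exact Or.inr ⟨v, Finset.mem_insert_self _ _, (G.mem_neighborFinset _ _).mp hn⟩
  have h1 := G.domNum_le_card hdom
  have h2 : (insert v (D.image Subtype.val)).card ≤ D.card + 1 := by
    have := Finset.card_insert_le v (D.image Subtype.val)
    have := Finset.card_image_le (s := D) (f := (Subtype.val : {a // a ∈ Bs} → V))
    omega
  omega


theorem key (N : ℕ) : ∀ {W : Type u} [Fintype W] [DecidableEq W] (G : SimpleGraph W)
    [DecidableRel G.Adj], Fintype.card W ≤ N → 2 ≤ G.domNum →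
    2 * G.edgeFinset.card ≤ (Fintype.card W - G.domNum) * (Fintype.card W - G.domNum + 2) := by
  induction N with
  | zero =>
    intro W _ _ G _ hcard hg
    have := G.domNum_le_cardV
    omega
  | succ N ih =>
    intro W _ _ G _ hcard hg
    have hgn : G.domNum ≤ Fintype.card W := G.domNum_le_cardV
    have hsum : ∑ w : W, G.degree w = 2 * G.edgeFinset.card :=
      G.sum_degrees_eq_twice_card_edges
    by_cases hg2 : G.domNum = 2
    · -- base case: every degree at most n - 2
      have hdeg : ∀ w : W, G.degree w ≤ Fintype.card W - 2 := fun w => by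
        have := G.degree_add_domNum_le w; omega
      have hb : ∑ w : W, G.degree w ≤ Fintype.card W * (Fintype.card W - 2) := by
        calc ∑ w : W, G.degree w ≤ ∑ _w : W, (Fintype.card W - 2) :=
              Finset.sum_le_sum (fun w _ => hdeg w)
          _ = Fintype.card W * (Fintype.card W - 2) := by
              rw [Finset.sum_const, Finset.card_univ, smul_eq_mul]
      rw [hg2]
      have h2n : 2 ≤ Fintype.card W := by omega
      have heq : (Fintype.card W - 2) * (Fintype.card W - 2 + 2)
          = Fintype.card W * (Fintype.card W - 2) := by
        rw [Nat.sub_add_cancel h2n, Nat.mul_comm]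
      omega
    · -- inductive step
      have hg3 : 3 ≤ G.domNum := by omega
      have hpos : 0 < Fintype.card W := by omega
      obtain ⟨v⟩ := Fintype.card_pos_iff.mp hpos
      set A := G.neighborFinset v with hA
      set Bs := Finset.univ \ insert v A with hBs
      set H := G.comap (Subtype.val : {a // a ∈ Bs} → W) with hH
      letI : DecidableRel H.Adj := fun a b => (inferInstance : Decidable (G.Adj a.val b.val))
      have hvA : v ∉ A := by simp [hA]
      have hAcard : A.card = G.degree v := G.card_neighborFinset_eq_degree v
      have hinscard : (insert v A).card = G.degree v + 1 := by
        rw [Finset.card_insert_of_notMem hvA, hAcard]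
      have hinsle : (insert v A).card ≤ Fintype.card W := Finset.card_le_univ _
      have hBscard : Bs.card + (G.degree v + 1) = Fintype.card W := by
        rw [hBs, Finset.card_sdiff_of_subset (Finset.subset_univ _), Finset.card_univ, hinscard]
        omega
      have hcardH : Fintype.card {a // a ∈ Bs} = Bs.card := Fintype.card_coe Bs
      -- domination number of H
      have hdomH : G.domNum ≤ H.domNum + 1 := by
        have := G.domNum_le_comap_succ v
        rw [← hA, ← hBs] at this
        exact this
      have hgH2 : 2 ≤ H.domNum := by omega
      have hgHn : H.domNum ≤ Fintype.card {a // a ∈ Bs} := H.domNum_le_cardV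
      have hNle : Fintype.card {a // a ∈ Bs} ≤ N := by omega
      have ihH := ih H hNle hgH2
      -- edge counting
      have huniv : Bs ∪ insert v A = Finset.univ := by
        rw [hBs]; exact Finset.sdiff_union_of_subset (Finset.subset_univ _)
      have hdisjBA : Disjoint Bs (insert v A) := by
        rw [hBs]; exact Finset.sdiff_disjoint
      have hsplit : ∑ w : W, G.degree w
          = ∑ u ∈ Bs, G.degree u + (G.degree v + ∑ x ∈ A, G.degree x) := by
        rw [← huniv, Finset.sum_union hdisjBA, Finset.sum_insert hvA]
      have hBdeg : ∀ u ∈ Bs, G.degree u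
          = (Bs.filter (G.Adj u)).card + (A.filter (G.Adj u)).card := by
        intro u hu
        have hnadj : ¬ G.Adj u v := by
          intro hadj
          have : u ∈ A := by rw [hA]; exact (G.mem_neighborFinset v u).mpr hadj.symm
          have : u ∈ insert v A := Finset.mem_insert_of_mem this
          rw [hBs] at hu
          exact (Finset.mem_sdiff.mp hu).2 this
        rw [← G.card_neighborFinset_eq_degree, SimpleGraph.neighborFinset_eq_filter,
          ← huniv, Finset.filter_union,
          Finset.card_union_of_disjoint
            (Finset.disjoint_filter_filter hdisjBA),
          Finset.filter_insert, if_neg hnadj]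
      have hsumB : ∑ u ∈ Bs, G.degree u
          = ∑ u ∈ Bs, (Bs.filter (G.Adj u)).card + ∑ u ∈ Bs, (A.filter (G.Adj u)).card := by
        rw [← Finset.sum_add_distrib]
        exact Finset.sum_congr rfl hBdeg
      have hsumH : ∑ u ∈ Bs, (Bs.filter (G.Adj u)).card = 2 * H.edgeFinset.card := by
        have h1 : ∑ y : {a // a ∈ Bs}, H.degree y = 2 * H.edgeFinset.card :=
          H.sum_degrees_eq_twice_card_edges
        rw [Finset.univ_eq_attach] at h1
        have h2 : ∑ y ∈ Bs.attach, H.degree y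
            = ∑ y ∈ Bs.attach, (Bs.filter (G.Adj y.val)).card :=
          Finset.sum_congr rfl (fun y _ => G.comap_degree Bs y)
        rw [h2, Finset.sum_attach Bs (fun u => (Bs.filter (G.Adj u)).card)] at h1
        exact h1.symm ▸ rfl
      have hdc : ∑ u ∈ Bs, (A.filter (G.Adj u)).card
          = ∑ x ∈ A, (Bs.filter (G.Adj x)).card := G.filter_card_comm Bs A
      -- abbreviations
      obtain ⟨k, hk⟩ : ∃ k, G.domNum + k = Fintype.card W := ⟨_, Nat.add_sub_cancel' hgn⟩
      have hdv : G.degree v + G.domNum ≤ Fintype.card W := G.degree_add_domNum_le v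
      obtain ⟨j, hj⟩ : ∃ j, G.degree v + j = k := ⟨k - G.degree v, by omega⟩
      -- bounds on sums
      have hS1 : ∑ x ∈ A, G.degree x ≤ G.degree v * k := by
        calc ∑ x ∈ A, G.degree x ≤ ∑ _x ∈ A, k :=
              Finset.sum_le_sum (fun x _ => by
                have := G.degree_add_domNum_le x; omega)
          _ = G.degree v * k := by rw [Finset.sum_const, smul_eq_mul, hAcard]
      have hS2 : ∑ x ∈ A, (Bs.filter (G.Adj x)).card + G.degree v * G.degree v
          ≤ G.degree v * (k + 1) := by
        have hb : ∀ x ∈ A, (Bs.filter (G.Adj x)).card + G.degree v ≤ k + 1 := by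
          intro x hx
          have hadj : G.Adj v x := (G.mem_neighborFinset v x).mp (hA ▸ hx)
          have h := G.adj_filter_bound hadj
          rw [← hA, ← hBs] at h
          omega
        calc ∑ x ∈ A, (Bs.filter (G.Adj x)).card + G.degree v * G.degree v
            = ∑ x ∈ A, ((Bs.filter (G.Adj x)).card + G.degree v) := by
              rw [Finset.sum_add_distrib, Finset.sum_const, smul_eq_mul, hAcard]
          _ ≤ ∑ _x ∈ A, (k + 1) := Finset.sum_le_sum hb
          _ = G.degree v * (k + 1) := by rw [Finset.sum_const, smul_eq_mul, hAcard]
      -- bound on H edges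
      have hkH : Fintype.card {a // a ∈ Bs} - H.domNum ≤ j := by omega
      have hmH : 2 * H.edgeFinset.card ≤ j * (j + 2) :=
        ihH.trans (Nat.mul_le_mul hkH (by omega))
      -- assemble
      have hfin : Fintype.card W - G.domNum = k := by omega
      rw [hfin]
      have h2m : 2 * G.edgeFinset.card
          = 2 * H.edgeFinset.card + ∑ x ∈ A, (Bs.filter (G.Adj x)).card
            + (G.degree v + ∑ x ∈ A, G.degree x) := by
        rw [← hsum, hsplit, hsumB, hsumH, hdc]
      have hgen : ∀ m mH S1 S2 d : ℕ, m = mH + S2 + (d + S1) → mH ≤ j * (j + 2) →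
          S1 ≤ d * k → S2 + d * d ≤ d * (k + 1) → d + j = k → m ≤ k * (k + 2) := by
        intro m mH S1 S2 d h1 h2 h3 h4 h5
        subst h5
        have e1 : j * (j + 2) = j * j + 2 * j := by ring
        have e2 : d * (d + j) = d * d + d * j := by ring
        have e3 : d * ((d + j) + 1) = d * d + d * j + d := by ring
        have e4 : (d + j) * ((d + j) + 2) = d * d + 2 * (d * j) + (j * j + (2 * d + 2 * j)) := by
          ring
        rw [e1] at h2
        rw [e2] at h3
        rw [e3] at h4
        rw [e4]
        generalize d * d = a at h3 h4 ⊢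
        generalize d * j = b at h3 h4 ⊢
        generalize j * j = c at h2 ⊢
        omega
      exact hgen _ _ _ _ _ h2m hmH hS1 hS2 hj

end SimpleGraph


end VizingAux

/-- Vizing: a graph of order `n` with domination number `γ ≥ 2` has at most
`⌊(n − γ)(n − γ + 2)/2⌋` edges. -/


theorem card_edges_le_of_domNum {V : Type*} [Fintype V] [DecidableEq V]
    (G : SimpleGraph V) [DecidableRel G.Adj] (h : 2 ≤ G.domNum) :
    G.edgeFinset.card ≤
      (Fintype.card V - G.domNum) * (Fintype.card V - G.domNum + 2) / 2 := by
  have h2 := SimpleGraph.key (Fintype.card V) G le_rfl h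
  omega
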